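/- arXiv:2205.14024 — 2 statements merged into one kernel-verified Lean document; each statement's English description precedes it below -/
import Mathlib

section
/- Let d ≥ 1 be an integer and let β ∈ (0, d). There exists a constant C > 0, depending only on d and β, such that for all t₁, t₂ > 0, all R > 0, and all ỹ, z̃ ∈ ℝ^d with ỹ ≠ z̃, ∫_{Q_R} ∫_{ℝ^d} ∫_{ℝ^d} p_{t₁}(x − y) p_{t₂}(z − ỹ) ‖y − ỹ‖^{−β} ‖z − z̃‖^{−β} dz dy dx ≤ C ‖ỹ − z̃‖^{−β} R^{d−β}. -/
open MeasureTheory Real Set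
open scoped ENNReal

noncomputable def heatKernel (d : ℕ) (t : ℝ) (x : EuclideanSpace ℝ (Fin d)) : ℝ :=
  (2 * Real.pi * t) ^ (-(d : ℝ) / 2) * Real.exp (-‖x‖ ^ 2 / (2 * t))

def box (d : ℕ) (R : ℝ) : Set (EuclideanSpace ℝ (Fin d)) :=
  {x | ∀ i, |x i| ≤ R}

variable {d : ℕ}

lemma hk_nonneg (t : ℝ) (ht : 0 < t) (x : EuclideanSpace ℝ (Fin d)) : 0 ≤ heatKernel d t x := by
  unfold heatKernel
  have : (0:ℝ) < 2 * Real.pi * t := by positivity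
  positivity

lemma gauss_integrable {b : ℝ} (hb : 0 < b) :
    Integrable (fun v : EuclideanSpace ℝ (Fin d) => rexp (-b * ‖v‖^2)) := by
  have h := (GaussianFourier.integrable_cexp_neg_mul_sq_norm_add
    (V := EuclideanSpace ℝ (Fin d)) (b := (b:ℂ)) (by simpa using hb) 0 0).norm
  refine h.congr (Filter.Eventually.of_forall fun v => ?_)
  beta_reduce
  simp only [zero_mul, add_zero]
  norm_cast
  exact Real.norm_of_nonneg (Real.exp_pos _).le

lemma hk_eq (t : ℝ) (x : EuclideanSpace ℝ (Fin d)) :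
    heatKernel d t x = (2 * π * t) ^ (-(d : ℝ) / 2) * rexp (-(1/(2*t)) * ‖x‖ ^ 2) := by
  unfold heatKernel
  ring_nf

lemma hk_integrable (t : ℝ) (ht : 0 < t) (c : EuclideanSpace ℝ (Fin d)) :
    Integrable (fun z : EuclideanSpace ℝ (Fin d) => heatKernel d t (z - c)) := by
  have : Integrable (fun z : EuclideanSpace ℝ (Fin d) => heatKernel d t z) := by
    simp_rw [hk_eq]
    exact (gauss_integrable (by positivity)).const_mul _
  exact this.comp_sub_right c

lemma hk_integral (t : ℝ) (ht : 0 < t) (c : EuclideanSpace ℝ (Fin d)) :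
    ∫ z : EuclideanSpace ℝ (Fin d), heatKernel d t (z - c) = 1 := by
  rw [integral_sub_right_eq_self (heatKernel d t) c]
  simp_rw [hk_eq]
  rw [integral_const_mul, GaussianFourier.integral_rexp_neg_mul_sq_norm (by positivity)]
  rw [finrank_euclideanSpace_fin]
  have h1 : π / (1/(2*t)) = 2 * π * t := by field_simp
  rw [h1, ← Real.rpow_add (by positivity)]
  rw [neg_div, neg_add_cancel, Real.rpow_zero]

lemma exp_bound (d : ℕ) {u : ℝ} (hu : 0 < u) :
    rexp (-u) ≤ Real.sqrt (d.factorial) * u ^ (-(d:ℝ)/2) := by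
  have hA : (0:ℝ) ≤ u ^ ((d:ℝ)/2) * rexp (-u) := by positivity
  have hsq : (u ^ ((d:ℝ)/2) * rexp (-u)) ^ 2 ≤ (d.factorial : ℝ) := by
    have h1 : u ^ (d:ℕ) / d.factorial ≤ rexp u := Real.pow_div_factorial_le_exp u hu.le d
    have h2 : (u ^ ((d:ℝ)/2)) ^ 2 = u ^ (d:ℕ) := by
      rw [← Real.rpow_natCast (u ^ ((d:ℝ)/2)) 2, ← Real.rpow_mul hu.le, ← Real.rpow_natCast u d]
      norm_num
    have h3 : rexp (-u) ^ 2 = rexp (-2*u) := by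
      rw [← Real.exp_nat_mul]; ring_nf
    have h4 : rexp (-2*u) ≤ rexp (-u) * rexp (-u) := by
      rw [← Real.exp_add]; apply le_of_eq; ring_nf
    have h5 : u ^ (d:ℕ) * rexp (-2*u) ≤ (d.factorial : ℝ) := by
      have hfac : (0:ℝ) < d.factorial := by positivity
      have := mul_le_mul_of_nonneg_right h1 (le_of_lt (Real.exp_pos (-u)))
      have hexpu : rexp u * rexp (-u) = 1 := by rw [← Real.exp_add]; norm_num
      calc u ^ (d:ℕ) * rexp (-2*u) = (u ^ (d:ℕ) * rexp (-u)) * rexp (-u) := by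
            rw [mul_assoc, ← Real.exp_add]; ring_nf
        _ ≤ ((d.factorial : ℝ) * rexp u * rexp (-u)) * rexp (-u) := by
            have h6 : u ^ (d:ℕ) ≤ (d.factorial : ℝ) * rexp u := by
              rw [div_le_iff₀ hfac] at h1; linarith
            have he : (0:ℝ) ≤ rexp (-u) := (Real.exp_pos _).le
            nlinarith [Real.exp_pos (-u), Real.exp_pos u]
        _ = (d.factorial : ℝ) * rexp (-u) := by
            rw [mul_assoc ((d.factorial:ℝ)) (rexp u) (rexp (-u)), hexpu]
            ring
        _ ≤ (d.factorial : ℝ) := by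
            nlinarith [Real.exp_le_one_iff.2 (by linarith : -u ≤ (0:ℝ)), hfac]
    calc (u ^ ((d:ℝ)/2) * rexp (-u)) ^ 2 = (u ^ ((d:ℝ)/2)) ^ 2 * rexp (-u) ^ 2 := by ring
      _ = u ^ (d:ℕ) * rexp (-2*u) := by rw [h2, h3]
      _ ≤ (d.factorial : ℝ) := h5
  have hle : u ^ ((d:ℝ)/2) * rexp (-u) ≤ Real.sqrt (d.factorial) := by
    exact Real.le_sqrt_of_sq_le hsq
  calc rexp (-u) = u ^ (-(d:ℝ)/2) * (u ^ ((d:ℝ)/2) * rexp (-u)) := by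
        rw [← mul_assoc, ← Real.rpow_add hu, neg_div, neg_add_cancel, Real.rpow_zero, one_mul]
    _ ≤ u ^ (-(d:ℝ)/2) * Real.sqrt (d.factorial) :=
        mul_le_mul_of_nonneg_left hle (Real.rpow_nonneg hu.le _)
    _ = Real.sqrt (d.factorial) * u ^ (-(d:ℝ)/2) := by ring

lemma two_inv_pow_identity {β : ℝ} (r : ℝ) (hr : 0 < r) (hβ0 : 0 < β) (k : ℕ) :
    (r * (2⁻¹:ℝ)^(k+1)) ^ (-β) * (r * (2⁻¹:ℝ)^k) ^ (d:ℕ)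
      = ((2:ℝ)^β * r ^ ((d:ℝ) - β)) * ((2:ℝ) ^ (β - (d:ℝ))) ^ k := by
  induction k with
  | zero =>
    rw [pow_zero, pow_one, mul_one, pow_zero, mul_one]
    have h1 : (r * 2⁻¹) ^ (-β) = r ^ (-β) * (2:ℝ)^β := by
      rw [Real.mul_rpow hr.le (by norm_num), Real.inv_rpow (by norm_num), ← Real.rpow_neg (by norm_num), neg_neg]
    rw [h1]
    have h2 : (r:ℝ) ^ (d:ℕ) = r ^ ((d:ℝ)) := (Real.rpow_natCast r d).symm
    rw [h2, mul_comm (r ^ (-β)) _, mul_assoc, ← Real.rpow_add hr]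
    ring_nf
  | succ k ih =>
    have hp : (0:ℝ) < (2⁻¹:ℝ)^(k+1) := by positivity
    have e1 : r * (2⁻¹:ℝ)^(k+1+1) = (r * (2⁻¹:ℝ)^(k+1)) * 2⁻¹ := by ring
    have e2 : r * (2⁻¹:ℝ)^(k+1) = (r * (2⁻¹:ℝ)^k) * 2⁻¹ := by ring
    have h1 : (r * (2⁻¹:ℝ)^(k+1+1)) ^ (-β) = (r * (2⁻¹:ℝ)^(k+1)) ^ (-β) * (2:ℝ)^β := by
      rw [e1, Real.mul_rpow (by positivity) (by norm_num), Real.inv_rpow (by norm_num),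
        ← Real.rpow_neg (by norm_num), neg_neg]
    have h2 : (r * (2⁻¹:ℝ)^(k+1)) ^ (d:ℕ) = (r * (2⁻¹:ℝ)^k) ^ (d:ℕ) * ((2⁻¹:ℝ))^(d:ℕ) := by
      rw [e2, mul_pow]
    have h3 : (2:ℝ)^β * ((2⁻¹:ℝ))^(d:ℕ) = (2:ℝ) ^ (β - (d:ℝ)) := by
      rw [inv_pow, ← Real.rpow_natCast (2:ℝ) d, ← Real.rpow_neg (by norm_num), ← Real.rpow_add (by norm_num)]
      ring_nf
    rw [h1, h2]
    calc (r * (2⁻¹:ℝ)^(k+1)) ^ (-β) * (2:ℝ)^β * ((r * (2⁻¹:ℝ)^k) ^ (d:ℕ) * ((2⁻¹:ℝ))^(d:ℕ))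
        = ((r * (2⁻¹:ℝ)^(k+1)) ^ (-β) * (r * (2⁻¹:ℝ)^k) ^ (d:ℕ)) * ((2:ℝ)^β * ((2⁻¹:ℝ))^(d:ℕ)) := by ring
      _ = ((2:ℝ)^β * r ^ ((d:ℝ) - β)) * ((2:ℝ) ^ (β - (d:ℝ))) ^ k * (2:ℝ) ^ (β - (d:ℝ)) := by rw [ih, h3]
      _ = ((2:ℝ)^β * r ^ ((d:ℝ) - β)) * ((2:ℝ) ^ (β - (d:ℝ))) ^ (k+1) := by ring

lemma riesz_bound (hd : 1 ≤ d) {β : ℝ} (hβ0 : 0 < β) (hβd : β < d) :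
    ∃ κ : ℝ, 0 < κ ∧
    (∀ (c : EuclideanSpace ℝ (Fin d)) (r : ℝ), 0 < r →
       IntegrableOn (fun x => ‖x - c‖ ^ (-β)) (Metric.ball c r) volume) ∧
    ∀ (c : EuclideanSpace ℝ (Fin d)) (r : ℝ), 0 < r →
      ∀ s : Set (EuclideanSpace ℝ (Fin d)), s ⊆ Metric.ball c r →
       (∫ x in s, ‖x - c‖ ^ (-β)) ≤ κ * r ^ ((d:ℝ) - β) := by
  haveI : Nonempty (Fin d) := ⟨⟨0, hd⟩⟩
  set mB := volume (Metric.ball (0:EuclideanSpace ℝ (Fin d)) 1) with hmB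
  have hmB_pos : 0 < mB := Metric.measure_ball_pos _ _ one_pos
  have hmB_top : mB < ⊤ := measure_ball_lt_top
  set q : ℝ := (2:ℝ) ^ (β - (d:ℝ)) with hqdef
  have hq0 : 0 < q := Real.rpow_pos_of_pos (by norm_num) _
  have hq1 : q < 1 := Real.rpow_lt_one_of_one_lt_of_neg (by norm_num) (by
    have : (β:ℝ) < d := hβd
    linarith)
  set G : ℝ≥0∞ := mB * (1 - ENNReal.ofReal q)⁻¹ with hG
  have hofq : ENNReal.ofReal q < 1 := by
    rw [← ENNReal.ofReal_one]
    exact ENNReal.ofReal_lt_ofReal_iff_of_nonneg hq0.le |>.2 hq1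
  have hG_top : G < ⊤ := by
    apply ENNReal.mul_lt_top hmB_top
    rw [ENNReal.inv_lt_top]
    exact tsub_pos_iff_lt.2 hofq
  -- the key lintegral bound
  have key : ∀ (c : EuclideanSpace ℝ (Fin d)) (r : ℝ), 0 < r →
      ∫⁻ x in Metric.ball c r, ENNReal.ofReal (‖x - c‖ ^ (-β))
        ≤ ENNReal.ofReal ((2:ℝ)^β * r ^ ((d:ℝ) - β)) * G := by
    intro c r hr
    set S : ℕ → Set (EuclideanSpace ℝ (Fin d)) := fun k =>
      Metric.ball c (r * (2⁻¹:ℝ)^k) \ Metric.ball c (r * (2⁻¹:ℝ)^(k+1)) with hS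
    have hcover : Metric.ball c r ⊆ {c} ∪ ⋃ k, S k := by
      intro x hx
      rcases eq_or_ne x c with h | h
      · exact Or.inl (by simp [h])
      · refine Or.inr ?_
        have hd0 : 0 < dist x c := dist_pos.2 h
        have hdr : dist x c < r := Metric.mem_ball.1 hx
        obtain ⟨n, hn⟩ := exists_pow_lt_of_lt_one (div_pos hd0 hr) (by norm_num : (2⁻¹:ℝ) < 1)
        have hP : ∃ m, r * (2⁻¹:ℝ)^(m+1) ≤ dist x c := by
          refine ⟨n, ?_⟩
          have h1 : r * (2⁻¹:ℝ)^n < dist x c := by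
            have := (lt_div_iff₀ hr).1 hn
            linarith
          have h2 : r * (2⁻¹:ℝ)^(n+1) ≤ r * (2⁻¹:ℝ)^n := by
            apply mul_le_mul_of_nonneg_left _ hr.le
            exact pow_le_pow_of_le_one (by norm_num) (by norm_num) (Nat.le_succ n)
          linarith
        have h1 := Nat.find_spec hP
        set k := Nat.find hP with hk
        have h2 : dist x c < r * (2⁻¹:ℝ)^k := by
          match hkk : k with
          | 0 => simpa using hdr
          | m+1 =>
            have := Nat.find_min hP (by omega : m < k)
            push_neg at this
            simpa using this
        refine Set.mem_iUnion.2 ⟨k, Metric.mem_ball.2 h2, fun hmem => ?_⟩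
        exact absurd (Metric.mem_ball.1 hmem) (not_lt.2 h1)
    calc ∫⁻ x in Metric.ball c r, ENNReal.ofReal (‖x - c‖ ^ (-β))
        ≤ ∫⁻ x in {c} ∪ ⋃ k, S k, ENNReal.ofReal (‖x - c‖ ^ (-β)) :=
          lintegral_mono_set hcover
      _ ≤ (∫⁻ x in ({c} : Set _), ENNReal.ofReal (‖x - c‖ ^ (-β)))
            + ∫⁻ x in ⋃ k, S k, ENNReal.ofReal (‖x - c‖ ^ (-β)) := lintegral_union_le _ _ _
      _ ≤ 0 + ∑' k, ∫⁻ x in S k, ENNReal.ofReal (‖x - c‖ ^ (-β)) := by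
          gcongr
          · exact le_of_eq (setLIntegral_measure_zero _ _ (measure_singleton c))
          · exact lintegral_iUnion_le _ _
      _ ≤ ∑' k, ENNReal.ofReal (((2:ℝ)^β * r ^ ((d:ℝ) - β)) * q ^ k) * mB := by
          rw [zero_add]
          apply ENNReal.tsum_le_tsum
          intro k
          have hrad : (0:ℝ) < r * (2⁻¹:ℝ)^(k+1) := by positivity
          have hb1 : ∫⁻ x in S k, ENNReal.ofReal (‖x - c‖ ^ (-β))
              ≤ ∫⁻ _ in S k, ENNReal.ofReal ((r * (2⁻¹:ℝ)^(k+1)) ^ (-β)) := by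
            apply setLIntegral_mono' (MeasurableSet.diff measurableSet_ball measurableSet_ball)
            intro x hx
            apply ENNReal.ofReal_le_ofReal
            apply Real.rpow_le_rpow_of_nonpos hrad _ (neg_nonpos.2 hβ0.le)
            have : ¬ (dist x c < r * (2⁻¹:ℝ)^(k+1)) := fun hc => hx.2 (Metric.mem_ball.2 hc)
            rw [dist_eq_norm] at this
            linarith [not_lt.1 this]
          refine le_trans hb1 ?_
          rw [setLIntegral_const]
          have hμ : volume (S k) ≤ ENNReal.ofReal ((r * (2⁻¹:ℝ)^k) ^ (d:ℕ)) * mB := by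
            refine le_trans (measure_mono Set.diff_subset) ?_
            rw [Measure.addHaar_ball _ _ (by positivity : (0:ℝ) ≤ r * (2⁻¹:ℝ)^k)]
            rw [finrank_euclideanSpace_fin]
          calc ENNReal.ofReal ((r * (2⁻¹:ℝ)^(k+1)) ^ (-β)) * volume (S k)
              ≤ ENNReal.ofReal ((r * (2⁻¹:ℝ)^(k+1)) ^ (-β))
                  * (ENNReal.ofReal ((r * (2⁻¹:ℝ)^k) ^ (d:ℕ)) * mB) := by gcongr
            _ = ENNReal.ofReal ((r * (2⁻¹:ℝ)^(k+1)) ^ (-β) * (r * (2⁻¹:ℝ)^k) ^ (d:ℕ)) * mB := by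
                rw [ENNReal.ofReal_mul (Real.rpow_nonneg hrad.le _), mul_assoc]
            _ = ENNReal.ofReal (((2:ℝ)^β * r ^ ((d:ℝ) - β)) * q ^ k) * mB := by
                rw [two_inv_pow_identity r hr hβ0 k]
      _ = ENNReal.ofReal ((2:ℝ)^β * r ^ ((d:ℝ) - β)) * G := by
          have hterm : ∀ k : ℕ, ENNReal.ofReal (((2:ℝ)^β * r ^ ((d:ℝ) - β)) * q ^ k) * mB
              = (ENNReal.ofReal ((2:ℝ)^β * r ^ ((d:ℝ) - β)) * mB) * (ENNReal.ofReal q) ^ k := by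
            intro k
            rw [ENNReal.ofReal_mul (mul_nonneg (Real.rpow_nonneg (by norm_num) _) (Real.rpow_nonneg hr.le _)), ENNReal.ofReal_pow hq0.le]
            ring
          simp_rw [hterm]
          rw [ENNReal.tsum_mul_left, ENNReal.tsum_geometric, hG]
          ring
  -- measurability
  have hmeas : ∀ c : EuclideanSpace ℝ (Fin d),
      Measurable (fun x : EuclideanSpace ℝ (Fin d) => ‖x - c‖ ^ (-β)) := by
    intro c; fun_prop
  have hG_pos : 0 < G := ENNReal.mul_pos hmB_pos.ne'
    (ENNReal.inv_ne_zero.2 (ne_top_of_le_ne_top ENNReal.one_ne_top tsub_le_self))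
  have hGt : 0 < G.toReal := ENNReal.toReal_pos hG_pos.ne' hG_top.ne
  refine ⟨(2:ℝ)^β * G.toReal, by positivity, ?_, ?_⟩
  · -- integrability
    intro c r hr
    constructor
    · exact ((hmeas c).aestronglyMeasurable).restrict
    · rw [hasFiniteIntegral_iff_ofReal (Filter.Eventually.of_forall fun x =>
        Real.rpow_nonneg (norm_nonneg _) _)]
      exact lt_of_le_of_lt (key c r hr) (ENNReal.mul_lt_top ENNReal.ofReal_lt_top hG_top)
  · -- integral bound
    intro c r hr s hs
    have h0 : 0 ≤ᵐ[volume.restrict s] fun x : EuclideanSpace ℝ (Fin d) => ‖x - c‖ ^ (-β) :=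
      Filter.Eventually.of_forall fun x => by
        simp only [Pi.zero_apply]
        positivity
    rw [integral_eq_lintegral_of_nonneg_ae h0 ((hmeas c).aestronglyMeasurable).restrict]
    have hle : ∫⁻ x in s, ENNReal.ofReal (‖x - c‖ ^ (-β))
        ≤ ENNReal.ofReal ((2:ℝ)^β * r ^ ((d:ℝ) - β)) * G :=
      le_trans (lintegral_mono_set hs) (key c r hr)
    calc (∫⁻ x in s, ENNReal.ofReal (‖x - c‖ ^ (-β))).toReal
        ≤ (ENNReal.ofReal ((2:ℝ)^β * r ^ ((d:ℝ) - β)) * G).toReal := by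
          apply ENNReal.toReal_mono _ hle
          exact (ENNReal.mul_lt_top ENNReal.ofReal_lt_top hG_top).ne
      _ = (2:ℝ)^β * r ^ ((d:ℝ) - β) * G.toReal := by
          rw [ENNReal.toReal_mul, ENNReal.toReal_ofReal
            (mul_nonneg (Real.rpow_nonneg (by norm_num) _) (Real.rpow_nonneg hr.le _))]
      _ = (2:ℝ)^β * G.toReal * r ^ ((d:ℝ) - β) := by ring

lemma conv_bound (hd : 1 ≤ d) {β : ℝ} (hβ0 : 0 < β) (hβd : β < d)
    (κ : ℝ) (hκ : 0 < κ)
    (hInt : ∀ (c : EuclideanSpace ℝ (Fin d)) (r : ℝ), 0 < r →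
       IntegrableOn (fun x => ‖x - c‖ ^ (-β)) (Metric.ball c r) volume)
    (hIB : ∀ (c : EuclideanSpace ℝ (Fin d)) (r : ℝ), 0 < r →
      ∀ s : Set (EuclideanSpace ℝ (Fin d)), s ⊆ Metric.ball c r →
       (∫ x in s, ‖x - c‖ ^ (-β)) ≤ κ * r ^ ((d:ℝ) - β))
    (hkint : ∀ (t : ℝ), 0 < t → ∀ c : EuclideanSpace ℝ (Fin d),
        Integrable (fun z : EuclideanSpace ℝ (Fin d) => heatKernel d t (z - c)))
    (hkone : ∀ (t : ℝ), 0 < t → ∀ c : EuclideanSpace ℝ (Fin d),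
        ∫ z : EuclideanSpace ℝ (Fin d), heatKernel d t (z - c) = 1) :
    ∀ t : ℝ, 0 < t → ∀ a b : EuclideanSpace ℝ (Fin d), a ≠ b →
      (∫ z : EuclideanSpace ℝ (Fin d), heatKernel d t (z - a) * ‖z - b‖ ^ (-β))
        ≤ (Real.sqrt d.factorial * (π/4) ^ (-(d:ℝ)/2) * κ + 2 ^ β) * ‖a - b‖ ^ (-β) := by
  intro t ht a b hab
  set c1 : ℝ := Real.sqrt d.factorial * (π/4) ^ (-(d:ℝ)/2) with hc1
  have hc1pos : 0 < c1 := by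
    apply mul_pos (Real.sqrt_pos.2 (by positivity))
    apply Real.rpow_pos_of_pos (by positivity)
  set ρ : ℝ := ‖a - b‖ with hρdef
  have hρ : 0 < ρ := norm_pos_iff.2 (sub_ne_zero.2 hab)
  set u : ℝ := ρ^2 / (8*t) with hu_def
  have hu : 0 < u := by positivity
  set A : ℝ := (2*π*t) ^ (-(d:ℝ)/2) * rexp (-u) with hA_def
  have hApos : 0 < A := by
    apply mul_pos (Real.rpow_pos_of_pos (by positivity) _) (Real.exp_pos _)
  set g : EuclideanSpace ℝ (Fin d) → ℝ := fun z =>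
    A * (Metric.ball b (ρ/2)).indicator (fun z => ‖z - b‖ ^ (-β)) z
      + (ρ/2) ^ (-β) * heatKernel d t (z - a) with hg
  have h_pt : ∀ z, heatKernel d t (z - a) * ‖z - b‖ ^ (-β) ≤ g z := by
    intro z
    by_cases hz : z ∈ Metric.ball b (ρ/2)
    · rw [hg]
      simp only [Set.indicator_of_mem hz]
      have h1 : ‖z - b‖ < ρ/2 := by
        have := Metric.mem_ball.1 hz; rwa [dist_eq_norm] at this
      have htri : ρ ≤ ‖z - b‖ + ‖z - a‖ := by
        have : a - b = (z - b) - (z - a) := by abel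
        rw [hρdef, this]
        exact norm_sub_le _ _
      have hza : ρ/2 ≤ ‖z - a‖ := by linarith
      have hk_le : heatKernel d t (z - a) ≤ A := by
        rw [hA_def]
        unfold heatKernel
        apply mul_le_mul_of_nonneg_left _ (Real.rpow_nonneg (by positivity) _)
        apply Real.exp_le_exp.2
        have key : ρ^2/(8*t) ≤ ‖z - a‖^2/(2*t) := by
          rw [div_le_div_iff₀ (by positivity) (by positivity)]
          nlinarith [mul_self_le_mul_self (by positivity : (0:ℝ) ≤ ρ/2) hza, ht]
        rw [neg_div]
        linarith
      have hr2 : (0:ℝ) ≤ ‖z - b‖ ^ (-β) := Real.rpow_nonneg (norm_nonneg _) _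
      have hsecond : 0 ≤ (ρ/2) ^ (-β) * heatKernel d t (z - a) :=
        mul_nonneg (Real.rpow_nonneg (by positivity) _) (hk_nonneg t ht _)
      nlinarith [mul_le_mul_of_nonneg_right hk_le hr2]
    · rw [hg]
      simp only [Set.indicator_of_notMem hz]
      have h1 : ρ/2 ≤ ‖z - b‖ := by
        have := (not_lt.1 (fun hc => hz (Metric.mem_ball.2 hc) : ¬ dist z b < ρ/2))
        rwa [dist_eq_norm] at this
      have h2 : ‖z - b‖ ^ (-β) ≤ (ρ/2) ^ (-β) :=
        Real.rpow_le_rpow_of_nonpos (by positivity) h1 (neg_nonpos.2 hβ0.le)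
      have := mul_le_mul_of_nonneg_left h2 (hk_nonneg t ht (z - a))
      nlinarith [hApos]
  have h_int_g : Integrable g := by
    apply Integrable.add
    · exact ((hInt b (ρ/2) (by positivity)).integrable_indicator
        measurableSet_ball).const_mul _
    · exact (hkint t ht a).const_mul _
  have h_mono : (∫ z : EuclideanSpace ℝ (Fin d), heatKernel d t (z - a) * ‖z - b‖ ^ (-β))
      ≤ ∫ z, g z := by
    apply integral_mono_of_nonneg
    · exact Filter.Eventually.of_forall fun z => by
        simp only [Pi.zero_apply]
        exact mul_nonneg (hk_nonneg t ht _) (Real.rpow_nonneg (norm_nonneg _) _)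
    · exact h_int_g
    · exact Filter.Eventually.of_forall h_pt
  have h_gval : ∫ z, g z
      = A * (∫ z in Metric.ball b (ρ/2), ‖z - b‖ ^ (-β)) + (ρ/2) ^ (-β) := by
    rw [hg]
    rw [integral_add (((hInt b (ρ/2) (by positivity)).integrable_indicator
        measurableSet_ball).const_mul _) ((hkint t ht a).const_mul _)]
    rw [integral_const_mul, integral_const_mul, integral_indicator measurableSet_ball,
      hkone t ht a, mul_one]
  have hball : (∫ z in Metric.ball b (ρ/2), ‖z - b‖ ^ (-β)) ≤ κ * (ρ/2) ^ ((d:ℝ) - β) :=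
    hIB b (ρ/2) (by positivity) _ (le_refl _)
  have hA_le : A ≤ c1 * ρ ^ (-(d:ℝ)) := by
    rw [hA_def, hc1]
    have h1 : rexp (-u) ≤ Real.sqrt d.factorial * u ^ (-(d:ℝ)/2) := exp_bound d hu
    calc (2*π*t) ^ (-(d:ℝ)/2) * rexp (-u)
        ≤ (2*π*t) ^ (-(d:ℝ)/2) * (Real.sqrt d.factorial * u ^ (-(d:ℝ)/2)) :=
          mul_le_mul_of_nonneg_left h1 (Real.rpow_nonneg (by positivity) _)
      _ = Real.sqrt d.factorial * ((2*π*t) ^ (-(d:ℝ)/2) * u ^ (-(d:ℝ)/2)) := by ring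
      _ = Real.sqrt d.factorial * ((2*π*t) * u) ^ (-(d:ℝ)/2) := by
          rw [← Real.mul_rpow (by positivity) hu.le]
      _ = Real.sqrt d.factorial * (π/4 * ρ^2) ^ (-(d:ℝ)/2) := by
          congr 2
          rw [hu_def]
          field_simp
          ring
      _ = Real.sqrt d.factorial * ((π/4) ^ (-(d:ℝ)/2) * (ρ^2) ^ (-(d:ℝ)/2)) := by
          rw [Real.mul_rpow (by positivity) (by positivity)]
      _ = Real.sqrt d.factorial * (π/4) ^ (-(d:ℝ)/2) * ρ ^ (-(d:ℝ)) := by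
          have h2 : ((ρ:ℝ)^2) ^ (-(d:ℝ)/2) = ρ ^ (-(d:ℝ)) := by
            rw [← Real.rpow_natCast ρ 2, ← Real.rpow_mul hρ.le]
            congr 1
            push_cast
            ring
          rw [h2]; ring
  have hhalf : (ρ/2) ^ ((d:ℝ) - β) ≤ ρ ^ ((d:ℝ) - β) :=
    Real.rpow_le_rpow (by positivity) (by linarith) (by linarith [hβd])
  have hcombine : ρ ^ (-(d:ℝ)) * ρ ^ ((d:ℝ) - β) = ρ ^ (-β) := by
    rw [← Real.rpow_add hρ]; ring_nf
  have hpiece1 : A * (∫ z in Metric.ball b (ρ/2), ‖z - b‖ ^ (-β)) ≤ c1 * κ * ρ ^ (-β) := by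
    calc A * (∫ z in Metric.ball b (ρ/2), ‖z - b‖ ^ (-β))
        ≤ A * (κ * (ρ/2) ^ ((d:ℝ) - β)) := mul_le_mul_of_nonneg_left hball hApos.le
      _ ≤ A * (κ * ρ ^ ((d:ℝ) - β)) := by
          apply mul_le_mul_of_nonneg_left (mul_le_mul_of_nonneg_left hhalf hκ.le) hApos.le
      _ ≤ (c1 * ρ ^ (-(d:ℝ))) * (κ * ρ ^ ((d:ℝ) - β)) := by
          apply mul_le_mul_of_nonneg_right hA_le
          exact mul_nonneg hκ.le (Real.rpow_nonneg hρ.le _)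
      _ = c1 * κ * (ρ ^ (-(d:ℝ)) * ρ ^ ((d:ℝ) - β)) := by ring
      _ = c1 * κ * ρ ^ (-β) := by rw [hcombine]
  have hpiece2 : ((ρ:ℝ)/2) ^ (-β) = 2 ^ β * ρ ^ (-β) := by
    rw [Real.div_rpow hρ.le (by norm_num), Real.rpow_neg (by norm_num : (0:ℝ) ≤ 2),
      div_eq_mul_inv, inv_inv]
    ring
  calc (∫ z : EuclideanSpace ℝ (Fin d), heatKernel d t (z - a) * ‖z - b‖ ^ (-β))
      ≤ ∫ z, g z := h_mono
    _ = A * (∫ z in Metric.ball b (ρ/2), ‖z - b‖ ^ (-β)) + (ρ/2) ^ (-β) := h_gval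
    _ ≤ c1 * κ * ρ ^ (-β) + 2 ^ β * ρ ^ (-β) := by rw [hpiece2]; linarith [hpiece1]
    _ = (c1 * κ + 2 ^ β) * ρ ^ (-β) := by ring

lemma box_measurable (R : ℝ) : MeasurableSet (box d R) := by
  have : box d R = ⋂ i, {x : EuclideanSpace ℝ (Fin d) | |x i| ≤ R} := by
    ext x; simp [box, Set.mem_iInter]
  rw [this]
  apply MeasurableSet.iInter
  intro i
  have hm : Measurable (fun x : EuclideanSpace ℝ (Fin d) => |x i|) := by fun_prop
  exact measurableSet_le hm measurable_const

lemma box_subset_closedBall {R : ℝ} (hR : 0 < R) :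
    box d R ⊆ Metric.closedBall (0 : EuclideanSpace ℝ (Fin d)) (Real.sqrt d * R) := by
  intro x hx
  rw [Metric.mem_closedBall, dist_zero_right]
  rw [EuclideanSpace.norm_eq]
  have h1 : ∑ i, ‖x i‖ ^ 2 ≤ (d : ℝ) * R ^ 2 := by
    calc ∑ i, ‖x i‖ ^ 2 ≤ ∑ _i : Fin d, R ^ 2 := by
          apply Finset.sum_le_sum
          intro i _
          have := hx i
          rw [Real.norm_eq_abs]
          nlinarith [abs_nonneg (x i)]
      _ = (d : ℝ) * R ^ 2 := by simp [Finset.sum_const]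
  calc Real.sqrt (∑ i, ‖x i‖ ^ 2) ≤ Real.sqrt ((d:ℝ) * R ^ 2) := Real.sqrt_le_sqrt h1
    _ = Real.sqrt d * R := by
        rw [Real.sqrt_mul (Nat.cast_nonneg d), Real.sqrt_sq hR.le]

lemma box_bound (hd : 1 ≤ d) {β : ℝ} (hβ0 : 0 < β) (hβd : β < d)
    (κ : ℝ) (hκ : 0 < κ)
    (hInt : ∀ (c : EuclideanSpace ℝ (Fin d)) (r : ℝ), 0 < r →
       IntegrableOn (fun x => ‖x - c‖ ^ (-β)) (Metric.ball c r) volume)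
    (hIB : ∀ (c : EuclideanSpace ℝ (Fin d)) (r : ℝ), 0 < r →
      ∀ s : Set (EuclideanSpace ℝ (Fin d)), s ⊆ Metric.ball c r →
       (∫ x in s, ‖x - c‖ ^ (-β)) ≤ κ * r ^ ((d:ℝ) - β)) :
    ∀ R : ℝ, 0 < R → ∀ a : EuclideanSpace ℝ (Fin d),
      IntegrableOn (fun x => ‖x - a‖ ^ (-β)) (box d R) volume ∧
      (∫ x in box d R, ‖x - a‖ ^ (-β))
        ≤ (κ + Real.sqrt d ^ d * (volume (Metric.ball (0:EuclideanSpace ℝ (Fin d)) 1)).toReal)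
            * R ^ ((d:ℝ) - β) := by
  haveI : Nonempty (Fin d) := ⟨⟨0, hd⟩⟩
  intro R hR a
  set mBt : ℝ := (volume (Metric.ball (0:EuclideanSpace ℝ (Fin d)) 1)).toReal with hmBt
  have hmBt0 : 0 ≤ mBt := ENNReal.toReal_nonneg
  set M : ℝ := Real.sqrt d * R + ‖a‖ + 1 with hM
  have hM0 : 0 < M := by positivity
  have hsub : box d R ⊆ Metric.ball a M := by
    intro x hx
    have h1 : ‖x‖ ≤ Real.sqrt d * R := by
      have := box_subset_closedBall hR hx
      rwa [Metric.mem_closedBall, dist_zero_right] at this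
    rw [Metric.mem_ball, dist_eq_norm]
    calc ‖x - a‖ ≤ ‖x‖ + ‖a‖ := norm_sub_le _ _
      _ < M := by rw [hM]; linarith
  have hIntBox : IntegrableOn (fun x => ‖x - a‖ ^ (-β)) (box d R) volume :=
    (hInt a M hM0).mono_set hsub
  refine ⟨hIntBox, ?_⟩
  -- split into near and far parts
  have hsplit : (∫ x in box d R, ‖x - a‖ ^ (-β))
      = (∫ x in box d R ∩ Metric.ball a R, ‖x - a‖ ^ (-β))
        + ∫ x in box d R \ Metric.ball a R, ‖x - a‖ ^ (-β) :=
    (integral_inter_add_diff measurableSet_ball hIntBox).symm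
  have hnear : (∫ x in box d R ∩ Metric.ball a R, ‖x - a‖ ^ (-β)) ≤ κ * R ^ ((d:ℝ) - β) :=
    hIB a R hR _ inter_subset_right
  -- far part
  have hfar : (∫ x in box d R \ Metric.ball a R, ‖x - a‖ ^ (-β))
      ≤ Real.sqrt d ^ d * mBt * R ^ ((d:ℝ) - β) := by
    have hmeasS : MeasurableSet (box d R \ Metric.ball a R) :=
      (box_measurable R).diff measurableSet_ball
    have hvol : volume (box d R \ Metric.ball a R)
        ≤ ENNReal.ofReal ((Real.sqrt d * R) ^ d) * volume (Metric.ball (0:EuclideanSpace ℝ (Fin d)) 1) := by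
      refine le_trans (measure_mono (fun x hx => box_subset_closedBall hR hx.1)) ?_
      rw [Measure.addHaar_closedBall _ _ (by positivity : (0:ℝ) ≤ Real.sqrt d * R)]
      rw [finrank_euclideanSpace_fin]
    have hvol_fin : volume (box d R \ Metric.ball a R) < ⊤ :=
      lt_of_le_of_lt hvol (ENNReal.mul_lt_top ENNReal.ofReal_lt_top measure_ball_lt_top)
    have hmono : (∫ x in box d R \ Metric.ball a R, ‖x - a‖ ^ (-β))
        ≤ ∫ _x in box d R \ Metric.ball a R, R ^ (-β) := by
      apply integral_mono_of_nonneg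
      · exact Filter.Eventually.of_forall fun x => by
          simp only [Pi.zero_apply]; positivity
      · exact integrableOn_const hvol_fin.ne
      · rw [Filter.EventuallyLE, ae_restrict_iff' hmeasS]
        apply Filter.Eventually.of_forall
        intro x hx
        have h1 : R ≤ ‖x - a‖ := by
          have := hx.2
          rw [Metric.mem_ball, dist_eq_norm] at this
          linarith [not_lt.1 this]
        exact Real.rpow_le_rpow_of_nonpos hR h1 (neg_nonpos.2 hβ0.le)
    rw [setIntegral_const] at hmono
    have htr : (volume (box d R \ Metric.ball a R)).toReal ≤ (Real.sqrt d * R) ^ d * mBt := by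
      calc (volume (box d R \ Metric.ball a R)).toReal
          ≤ (ENNReal.ofReal ((Real.sqrt d * R) ^ d)
              * volume (Metric.ball (0:EuclideanSpace ℝ (Fin d)) 1)).toReal :=
            ENNReal.toReal_mono (ENNReal.mul_lt_top ENNReal.ofReal_lt_top measure_ball_lt_top).ne hvol
        _ = (Real.sqrt d * R) ^ d * mBt := by
            rw [ENNReal.toReal_mul, ENNReal.toReal_ofReal (by positivity)]
    have hRpow : ((Real.sqrt d * R) ^ d : ℝ) * R ^ (-β) = Real.sqrt d ^ d * R ^ ((d:ℝ) - β) := by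
      rw [mul_pow]
      have h2 : (R:ℝ) ^ (d:ℕ) = R ^ ((d:ℝ)) := (Real.rpow_natCast R d).symm
      rw [h2, mul_assoc, ← Real.rpow_add hR]
      ring_nf
    calc (∫ x in box d R \ Metric.ball a R, ‖x - a‖ ^ (-β))
        ≤ (volume (box d R \ Metric.ball a R)).toReal • R ^ (-β) := hmono
      _ = (volume (box d R \ Metric.ball a R)).toReal * R ^ (-β) := by rw [smul_eq_mul]
      _ ≤ (Real.sqrt d * R) ^ d * mBt * R ^ (-β) := by
          apply mul_le_mul_of_nonneg_right htr (Real.rpow_nonneg hR.le _)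
      _ = ((Real.sqrt d * R) ^ d * R ^ (-β)) * mBt := by ring
      _ = (Real.sqrt d ^ d * R ^ ((d:ℝ) - β)) * mBt := by rw [hRpow]
      _ = Real.sqrt d ^ d * mBt * R ^ ((d:ℝ) - β) := by ring
  rw [hsplit]
  have : (κ + Real.sqrt d ^ d * mBt) * R ^ ((d:ℝ) - β)
      = κ * R ^ ((d:ℝ) - β) + Real.sqrt d ^ d * mBt * R ^ ((d:ℝ) - β) := by ring
  rw [this]
  exact add_le_add hnear hfar

lemma hk_symm (t : ℝ) (x y : EuclideanSpace ℝ (Fin d)) :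
    heatKernel d t (x - y) = heatKernel d t (y - x) := by
  unfold heatKernel
  rw [norm_sub_rev]

theorem stmt_6 (d : ℕ) (hd : 1 ≤ d) (β : ℝ) (hβ0 : 0 < β) (hβd : β < d) :
    ∃ C : ℝ, 0 < C ∧ ∀ t₁ t₂ : ℝ, 0 < t₁ → 0 < t₂ → ∀ R : ℝ, 0 < R →
      ∀ ytil ztil : EuclideanSpace ℝ (Fin d), ytil ≠ ztil →
      (∫ x in box d R, ∫ y : EuclideanSpace ℝ (Fin d), ∫ z : EuclideanSpace ℝ (Fin d),
          heatKernel d t₁ (x - y) * heatKernel d t₂ (z - ytil) *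
            ‖y - ytil‖ ^ (-β) * ‖z - ztil‖ ^ (-β)) ≤
        C * ‖ytil - ztil‖ ^ (-β) * R ^ ((d : ℝ) - β) := by
  haveI : Nonempty (Fin d) := ⟨⟨0, hd⟩⟩
  obtain ⟨κ, hκ, hInt, hIB⟩ := riesz_bound hd hβ0 hβd
  have hkint : ∀ (t : ℝ), 0 < t → ∀ c : EuclideanSpace ℝ (Fin d),
      Integrable (fun z : EuclideanSpace ℝ (Fin d) => heatKernel d t (z - c)) :=
    fun t ht c => hk_integrable t ht c
  have hkone : ∀ (t : ℝ), 0 < t → ∀ c : EuclideanSpace ℝ (Fin d),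
      ∫ z : EuclideanSpace ℝ (Fin d), heatKernel d t (z - c) = 1 :=
    fun t ht c => hk_integral t ht c
  set C₂ : ℝ := Real.sqrt d.factorial * (π/4) ^ (-(d:ℝ)/2) * κ + 2 ^ β with hC₂
  have hC₂pos : 0 < C₂ := by
    have h1 : 0 < Real.sqrt d.factorial := Real.sqrt_pos.2 (by positivity)
    have h2 : (0:ℝ) < (π/4) ^ (-(d:ℝ)/2) := Real.rpow_pos_of_pos (by positivity) _
    have h3 : (0:ℝ) < (2:ℝ) ^ β := Real.rpow_pos_of_pos (by norm_num) _
    positivity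
  have hconv := conv_bound hd hβ0 hβd κ hκ hInt hIB hkint hkone
  set mBt : ℝ := (volume (Metric.ball (0:EuclideanSpace ℝ (Fin d)) 1)).toReal with hmBt
  set C₃ : ℝ := κ + Real.sqrt d ^ d * mBt with hC₃
  have hC₃pos : 0 < C₃ := by
    have h1 : (0:ℝ) ≤ Real.sqrt d ^ d * mBt :=
      mul_nonneg (pow_nonneg (Real.sqrt_nonneg _) _) ENNReal.toReal_nonneg
    have := hκ
    positivity
  have hbox := box_bound hd hβ0 hβd κ hκ hInt hIB
  refine ⟨C₂ * C₃ * C₂, by positivity, ?_⟩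
  intro t₁ t₂ ht₁ ht₂ R hR ytil ztil hne
  set I₂ : ℝ := ∫ z : EuclideanSpace ℝ (Fin d),
    heatKernel d t₂ (z - ytil) * ‖z - ztil‖ ^ (-β) with hI₂
  have hI₂nonneg : 0 ≤ I₂ :=
    integral_nonneg fun z => mul_nonneg (hk_nonneg t₂ ht₂ _)
      (Real.rpow_nonneg (norm_nonneg _) _)
  have hI₂le : I₂ ≤ C₂ * ‖ytil - ztil‖ ^ (-β) := hconv t₂ ht₂ ytil ztil hne
  have hre : ∀ x y : EuclideanSpace ℝ (Fin d),
      (∫ z : EuclideanSpace ℝ (Fin d), heatKernel d t₁ (x - y) * heatKernel d t₂ (z - ytil) *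
          ‖y - ytil‖ ^ (-β) * ‖z - ztil‖ ^ (-β))
        = (heatKernel d t₁ (x - y) * ‖y - ytil‖ ^ (-β)) * I₂ := by
    intro x y
    have h : (fun z : EuclideanSpace ℝ (Fin d) => heatKernel d t₁ (x - y) *
        heatKernel d t₂ (z - ytil) * ‖y - ytil‖ ^ (-β) * ‖z - ztil‖ ^ (-β))
        = fun z => (heatKernel d t₁ (x - y) * ‖y - ytil‖ ^ (-β)) *
            (heatKernel d t₂ (z - ytil) * ‖z - ztil‖ ^ (-β)) := by
      funext z; ring
    rw [h, integral_const_mul, hI₂]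
  have hre2 : ∀ x : EuclideanSpace ℝ (Fin d),
      (∫ y : EuclideanSpace ℝ (Fin d),
          (heatKernel d t₁ (x - y) * ‖y - ytil‖ ^ (-β)) * I₂)
        = (∫ y : EuclideanSpace ℝ (Fin d),
            heatKernel d t₁ (x - y) * ‖y - ytil‖ ^ (-β)) * I₂ :=
    fun x => integral_mul_const I₂ _
  have htotal : (∫ x in box d R, ∫ y : EuclideanSpace ℝ (Fin d),
        ∫ z : EuclideanSpace ℝ (Fin d),
          heatKernel d t₁ (x - y) * heatKernel d t₂ (z - ytil) *
            ‖y - ytil‖ ^ (-β) * ‖z - ztil‖ ^ (-β))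
      = (∫ x in box d R, ∫ y : EuclideanSpace ℝ (Fin d),
          heatKernel d t₁ (x - y) * ‖y - ytil‖ ^ (-β)) * I₂ := by
    simp_rw [hre, hre2]
    exact integral_mul_const I₂ _
  set J : EuclideanSpace ℝ (Fin d) → ℝ := fun x =>
    ∫ y : EuclideanSpace ℝ (Fin d), heatKernel d t₁ (x - y) * ‖y - ytil‖ ^ (-β) with hJdef
  have hJnonneg : ∀ x, 0 ≤ J x := fun x =>
    integral_nonneg fun y => mul_nonneg (hk_nonneg t₁ ht₁ _)
      (Real.rpow_nonneg (norm_nonneg _) _)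
  have hJle : ∀ x : EuclideanSpace ℝ (Fin d), x ≠ ytil → J x ≤ C₂ * ‖x - ytil‖ ^ (-β) := by
    intro x hx
    have h : J x = ∫ y : EuclideanSpace ℝ (Fin d),
        heatKernel d t₁ (y - x) * ‖y - ytil‖ ^ (-β) := by
      rw [hJdef]
      simp_rw [hk_symm t₁]
    rw [h]
    exact hconv t₁ ht₁ x ytil hx
  have hJint : (∫ x in box d R, J x) ≤ C₂ * (C₃ * R ^ ((d:ℝ) - β)) := by
    have hboxR := hbox R hR ytil
    have hg_int : IntegrableOn (fun x => C₂ * ‖x - ytil‖ ^ (-β)) (box d R) volume :=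
      hboxR.1.const_mul C₂
    have hmono : (∫ x in box d R, J x) ≤ ∫ x in box d R, C₂ * ‖x - ytil‖ ^ (-β) := by
      apply integral_mono_of_nonneg
      · exact Filter.Eventually.of_forall fun x => by
          simp only [Pi.zero_apply]; exact hJnonneg x
      · exact hg_int
      · have hae : ∀ᵐ x : EuclideanSpace ℝ (Fin d) ∂volume, x ≠ ytil := by
          rw [ae_iff]
          simp only [not_not, setOf_eq_eq_singleton]
          exact measure_singleton ytil
        exact (ae_restrict_of_ae hae).mono fun x hx => hJle x hx
    calc (∫ x in box d R, J x) ≤ ∫ x in box d R, C₂ * ‖x - ytil‖ ^ (-β) := hmono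
      _ = C₂ * ∫ x in box d R, ‖x - ytil‖ ^ (-β) := integral_const_mul _ _
      _ ≤ C₂ * (C₃ * R ^ ((d:ℝ) - β)) :=
          mul_le_mul_of_nonneg_left hboxR.2 hC₂pos.le
  rw [htotal]
  calc (∫ x in box d R, J x) * I₂
      ≤ (C₂ * (C₃ * R ^ ((d:ℝ) - β))) * (C₂ * ‖ytil - ztil‖ ^ (-β)) := by
        apply mul_le_mul hJint hI₂le hI₂nonneg
        have : (0:ℝ) ≤ R ^ ((d:ℝ) - β) := Real.rpow_nonneg hR.le _
        positivity
    _ = C₂ * C₃ * C₂ * ‖ytil - ztil‖ ^ (-β) * R ^ ((d : ℝ) - β) := by ring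
end

section
/- Let d ≥ 1 be an integer and let β ∈ (0, d). There exists a constant C > 0, depending only on d and β, such that for all t₁, t₂ > 0, all R > 0, and all ξ ∈ ℝ^d, ∫_{Q_R × Q_R} ∫_{ℝ^d} p_{t₁}(x₁ − ỹ) ‖ξ − ỹ‖^{−β} ‖x₂ − ỹ‖^{−β} dỹ dx₁ dx₂ ≤ C R^{2d−2β}. (This is the final reduction step in the proof of the bound on Φ^{(1)}: after integrating out the remaining Gaussian factors, the i = 1 case of Lemma A.3 reduces to this estimate.) -/
open MeasureTheory

namespace Stmt12

open Set Metric ENNReal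

variable {α : Type*} [MeasurableSpace α]

lemma integral_le_toReal_lintegral (μ : Measure α) (f : α → ℝ) (hf : ∀ a, 0 ≤ f a) :
    ∫ a, f a ∂μ ≤ (∫⁻ a, ENNReal.ofReal (f a) ∂μ).toReal := by
  by_cases hi : Integrable f μ
  · rw [integral_eq_lintegral_of_nonneg_ae (Filter.Eventually.of_forall hf)
      hi.aestronglyMeasurable]
  · rw [integral_undef hi]; exact ENNReal.toReal_nonneg

lemma ofReal_integral_le (μ : Measure α) (f : α → ℝ) (hf : ∀ a, 0 ≤ f a) :
    ENNReal.ofReal (∫ a, f a ∂μ) ≤ ∫⁻ a, ENNReal.ofReal (f a) ∂μ := by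
  by_cases hi : Integrable f μ
  · rw [ofReal_integral_eq_lintegral_ofReal hi (Filter.Eventually.of_forall hf)]
  · rw [integral_undef hi]; simp

lemma box_eq_preimage (d : ℕ) (R : ℝ) :
    box d R = (MeasurableEquiv.toLp 2 (Fin d → ℝ)).symm ⁻¹'
      (Set.univ.pi fun _ : Fin d => Icc (-R) R) := by
  ext x
  simp only [box, Set.mem_setOf_eq, Set.mem_preimage, Set.mem_pi, Set.mem_univ, true_implies,
    Set.mem_Icc]
  exact forall_congr' fun i => abs_le

lemma measurableSet_box (d : ℕ) (R : ℝ) : MeasurableSet (box d R) := by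
  rw [box_eq_preimage]
  exact (MeasurableEquiv.toLp 2 (Fin d → ℝ)).symm.measurable
    (MeasurableSet.univ_pi fun _ => measurableSet_Icc)

lemma volume_box (d : ℕ) {R : ℝ} (hR : 0 ≤ R) :
    volume (box d R) = ENNReal.ofReal ((2 * R) ^ d) := by
  rw [box_eq_preimage,
    (EuclideanSpace.volume_preserving_symm_measurableEquiv_toLp (Fin d)).measure_preimage
      ((MeasurableSet.univ_pi fun _ => measurableSet_Icc).nullMeasurableSet),
    volume_pi_pi]
  simp only [Real.volume_Icc]
  rw [Finset.prod_const, Finset.card_univ, Fintype.card_fin, ← ENNReal.ofReal_pow (by linarith)]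
  congr 1
  ring



lemma heatKernel_nonneg (d : ℕ) {t : ℝ} (ht : 0 ≤ t) (x : EuclideanSpace ℝ (Fin d)) :
    0 ≤ heatKernel d t x :=
  mul_nonneg (Real.rpow_nonneg (by positivity) _) (Real.exp_nonneg _)

lemma continuous_heatKernel (d : ℕ) (t : ℝ) : Continuous (heatKernel d t) :=
  continuous_const.mul (Real.continuous_exp.comp ((continuous_norm.pow 2).neg.div_const (2 * t)))

lemma integrable_gauss (d : ℕ) {b : ℝ} (hb : 0 < b) :
    Integrable (fun x : EuclideanSpace ℝ (Fin d) => Real.exp (-b * ‖x‖ ^ 2)) := by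
  have h := (GaussianFourier.integrable_cexp_neg_mul_sq_norm_add
      (b := (b : ℂ)) (by simpa using hb) 0 (0 : EuclideanSpace ℝ (Fin d))).norm
  refine h.congr (Filter.Eventually.of_forall fun x => ?_)
  simp [Complex.norm_exp, ← Complex.ofReal_pow, ← Complex.ofReal_neg, ← Complex.ofReal_mul]

lemma integrable_heatKernel (d : ℕ) {t : ℝ} (ht : 0 < t) :
    Integrable (heatKernel d t) := by
  have hb : 0 < (2 * t)⁻¹ := by positivity
  have h := (integrable_gauss d hb).const_mul ((2 * Real.pi * t) ^ (-(d : ℝ) / 2))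
  refine h.congr (Filter.Eventually.of_forall fun x => ?_)
  have harg : -(2 * t)⁻¹ * ‖x‖ ^ 2 = -‖x‖ ^ 2 / (2 * t) := by field_simp
  rw [heatKernel, ← harg]

lemma integral_heatKernel (d : ℕ) {t : ℝ} (ht : 0 < t) :
    ∫ x : EuclideanSpace ℝ (Fin d), heatKernel d t x = 1 := by
  have hb : 0 < (2 * t)⁻¹ := by positivity
  have h2 : (0 : ℝ) < 2 * Real.pi * t := by positivity
  have harg : ∀ x : EuclideanSpace ℝ (Fin d), -‖x‖ ^ 2 / (2 * t) = -(2 * t)⁻¹ * ‖x‖ ^ 2 :=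
    fun x => by field_simp
  simp only [heatKernel, harg]
  rw [integral_const_mul, GaussianFourier.integral_rexp_neg_mul_sq_norm hb,
    finrank_euclideanSpace_fin]
  have hpib : Real.pi / (2 * t)⁻¹ = 2 * Real.pi * t := by field_simp
  rw [hpib, ← Real.rpow_add h2]
  have : -(d : ℝ) / 2 + (d : ℝ) / 2 = 0 := by ring
  rw [this, Real.rpow_zero]

lemma lintegral_heatKernel (d : ℕ) {t : ℝ} (ht : 0 < t) :
    ∫⁻ x : EuclideanSpace ℝ (Fin d), ENNReal.ofReal (heatKernel d t x) = 1 := by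
  rw [← ofReal_integral_eq_lintegral_ofReal (integrable_heatKernel d ht)
      (Filter.Eventually.of_forall (heatKernel_nonneg d ht.le)), integral_heatKernel d ht,
    ENNReal.ofReal_one]



noncomputable def Gk (d : ℕ) (β : ℝ) (a y : EuclideanSpace ℝ (Fin d)) : ℝ≥0∞ :=
  ENNReal.ofReal (‖a - y‖ ^ (-β))

lemma near_bound (d : ℕ) {β : ℝ} (hβ0 : 0 < β) (hβd : β < d)
    (a : EuclideanSpace ℝ (Fin d)) {R : ℝ} (hR : 0 < R) :
    ∫⁻ y in ball a R, Gk d β a y ≤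
      ENNReal.ofReal ((volume (ball (0 : EuclideanSpace ℝ (Fin d)) 1)).toReal *
        (1 + β / ((d : ℝ) - β)) * R ^ ((d : ℝ) - β)) := by
  set vb := volume (ball (0 : EuclideanSpace ℝ (Fin d)) 1) with hvb_def
  have hvb_ne : vb ≠ ⊤ := measure_ball_lt_top.ne
  set vbR := vb.toReal with hvbR_def
  have hvb_eq : vb = ENNReal.ofReal vbR := (ENNReal.ofReal_toReal hvb_ne).symm
  have hvbR0 : 0 ≤ vbR := ENNReal.toReal_nonneg
  have hdβ : 0 < (d : ℝ) - β := sub_pos.2 hβd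
  have hβne : β ≠ 0 := hβ0.ne'
  have hdβne : (d : ℝ) - β ≠ 0 := hdβ.ne'
  have hT0 : 0 < R ^ (-β) := Real.rpow_pos_of_pos hR _
  have hfmeas : Measurable fun y : EuclideanSpace ℝ (Fin d) => ‖a - y‖ ^ (-β) :=
    (measurable_const.sub measurable_id).norm.pow measurable_const
  have hrw : (∫⁻ y in ball a R, Gk d β a y)
      = ∫⁻ t in Ioi (0 : ℝ), (volume.restrict (ball a R)) {y | t < ‖a - y‖ ^ (-β)} :=
    lintegral_eq_lintegral_meas_lt _
      (Filter.Eventually.of_forall fun y => Real.rpow_nonneg (norm_nonneg _) _)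
      hfmeas.aemeasurable
  rw [hrw, ← Set.Ioc_union_Ioi_eq_Ioi hT0.le,
    lintegral_union measurableSet_Ioi (Set.Ioc_disjoint_Ioi le_rfl)]
  have hball : volume (ball a R) = ENNReal.ofReal (R ^ d) * vb := by
    rw [Measure.addHaar_ball_of_pos volume a hR, finrank_euclideanSpace_fin]
  -- Part 1 : small t
  have hB1 : (∫⁻ t in Ioc (0 : ℝ) (R ^ (-β)),
      (volume.restrict (ball a R)) {y | t < ‖a - y‖ ^ (-β)})
      ≤ ENNReal.ofReal (vbR * R ^ ((d : ℝ) - β)) := by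
    calc (∫⁻ t in Ioc (0 : ℝ) (R ^ (-β)),
        (volume.restrict (ball a R)) {y | t < ‖a - y‖ ^ (-β)})
        ≤ ∫⁻ _ in Ioc (0 : ℝ) (R ^ (-β)), (ENNReal.ofReal (R ^ d) * vb) := by
          refine setLIntegral_mono' measurableSet_Ioc fun t _ => ?_
          calc (volume.restrict (ball a R)) {y | t < ‖a - y‖ ^ (-β)}
              ≤ (volume.restrict (ball a R)) univ := measure_mono (subset_univ _)
            _ = volume (ball a R) := Measure.restrict_apply_univ _
            _ = _ := hball
      _ = (ENNReal.ofReal (R ^ d) * vb) * volume (Ioc (0 : ℝ) (R ^ (-β))) :=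
          setLIntegral_const _ _
      _ = ENNReal.ofReal (R ^ d) * ENNReal.ofReal vbR * ENNReal.ofReal (R ^ (-β) - 0) := by
          rw [Real.volume_Ioc, hvb_eq]
      _ = ENNReal.ofReal (R ^ d * vbR * (R ^ (-β) - 0)) := by
          rw [← ENNReal.ofReal_mul (by positivity), ← ENNReal.ofReal_mul (by positivity)]
      _ = ENNReal.ofReal (vbR * R ^ ((d : ℝ) - β)) := by
          congr 1
          rw [sub_zero, ← Real.rpow_natCast R d,
            show R ^ ((d : ℝ)) * vbR * R ^ (-β) = vbR * (R ^ ((d : ℝ)) * R ^ (-β)) from by ring,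
            ← Real.rpow_add hR, show (d : ℝ) + -β = (d : ℝ) - β from by ring]
  -- Part 2 : large t
  have hexp : -((d : ℝ) / β) < -1 := by
    rw [neg_lt_neg_iff]
    exact (one_lt_div hβ0).2 hβd
  have hB2 : (∫⁻ t in Ioi (R ^ (-β)),
      (volume.restrict (ball a R)) {y | t < ‖a - y‖ ^ (-β)})
      ≤ ENNReal.ofReal (vbR * (β / ((d : ℝ) - β)) * R ^ ((d : ℝ) - β)) := by
    have hpt : ∀ t ∈ Ioi (R ^ (-β)),
        (volume.restrict (ball a R)) {y | t < ‖a - y‖ ^ (-β)}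
          ≤ ENNReal.ofReal (t ^ (-((d : ℝ) / β))) * vb := by
      intro t ht
      have ht0 : 0 < t := hT0.trans ht
      have hr0 : 0 < t ^ (-1 / β) := Real.rpow_pos_of_pos ht0 _
      have hsub : {y : EuclideanSpace ℝ (Fin d) | t < ‖a - y‖ ^ (-β)} ⊆
          ball a (t ^ (-1 / β)) := by
        intro y hy
        simp only [mem_setOf_eq] at hy
        have hs0 : 0 < ‖a - y‖ := by
          rcases eq_or_lt_of_le (norm_nonneg (a - y)) with h | h
          · exfalso
            rw [← h, Real.zero_rpow (neg_ne_zero.2 hβne)] at hy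
            exact absurd (ht0.trans hy) (lt_irrefl 0)
          · exact h
        have hneg : -1 / β < 0 := div_neg_of_neg_of_pos (by norm_num) hβ0
        have hlt : ((‖a - y‖ : ℝ) ^ (-β)) ^ (-1 / β) < t ^ (-1 / β) :=
          Real.rpow_lt_rpow_of_neg ht0 hy hneg
        rw [← Real.rpow_mul (norm_nonneg _), show (-β) * (-1 / β) = 1 from by field_simp,
          Real.rpow_one] at hlt
        exact mem_ball.2 (by rw [dist_eq_norm, norm_sub_rev]; exact hlt)
      have hSm : MeasurableSet {y : EuclideanSpace ℝ (Fin d) | t < ‖a - y‖ ^ (-β)} :=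
        measurableSet_lt measurable_const hfmeas
      calc (volume.restrict (ball a R)) {y | t < ‖a - y‖ ^ (-β)}
          = volume ({y : EuclideanSpace ℝ (Fin d) | t < ‖a - y‖ ^ (-β)} ∩ ball a R) :=
            Measure.restrict_apply hSm
        _ ≤ volume (ball a (t ^ (-1 / β))) := measure_mono (inter_subset_left.trans hsub)
        _ = ENNReal.ofReal ((t ^ (-1 / β)) ^ d) * vb := by
            rw [Measure.addHaar_ball_of_pos volume a hr0, finrank_euclideanSpace_fin]
        _ = ENNReal.ofReal (t ^ (-((d : ℝ) / β))) * vb := by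
            congr 2
            rw [← Real.rpow_natCast (t ^ (-1 / β)) d, ← Real.rpow_mul ht0.le]
            congr 1
            ring
    have hnn : 0 ≤ᵐ[volume.restrict (Ioi (R ^ (-β)))]
        fun t : ℝ => t ^ (-((d : ℝ) / β)) := by
      filter_upwards [ae_restrict_mem measurableSet_Ioi] with t ht
      exact Real.rpow_nonneg (hT0.trans ht).le _
    have hval : -(R ^ (-β)) ^ (-((d : ℝ) / β) + 1) / (-((d : ℝ) / β) + 1)
        = (β / ((d : ℝ) - β)) * R ^ ((d : ℝ) - β) := by
      have h1 : ((R ^ (-β) : ℝ)) ^ (-((d : ℝ) / β) + 1) = R ^ ((d : ℝ) - β) := by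
        rw [← Real.rpow_mul hR.le]
        congr 1
        field_simp
        ring
      have h2 : -((d : ℝ) / β) + 1 = -(((d : ℝ) - β) / β) := by field_simp; ring
      rw [h1, h2, neg_div_neg_eq, div_div_eq_mul_div]; ring
    calc (∫⁻ t in Ioi (R ^ (-β)),
        (volume.restrict (ball a R)) {y | t < ‖a - y‖ ^ (-β)})
        ≤ ∫⁻ t in Ioi (R ^ (-β)), ENNReal.ofReal (t ^ (-((d : ℝ) / β))) * vb :=
          setLIntegral_mono' measurableSet_Ioi hpt
      _ = (∫⁻ t in Ioi (R ^ (-β)), ENNReal.ofReal (t ^ (-((d : ℝ) / β)))) * vb :=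
          lintegral_mul_const' _ _ hvb_ne
      _ = ENNReal.ofReal (∫ t in Ioi (R ^ (-β)), t ^ (-((d : ℝ) / β))) * vb := by
          rw [ofReal_integral_eq_lintegral_ofReal (integrableOn_Ioi_rpow_of_lt hexp hT0) hnn]
      _ = ENNReal.ofReal ((β / ((d : ℝ) - β)) * R ^ ((d : ℝ) - β)) * ENNReal.ofReal vbR := by
          rw [integral_Ioi_rpow_of_lt hexp hT0, hval, hvb_eq]
      _ = ENNReal.ofReal (vbR * (β / ((d : ℝ) - β)) * R ^ ((d : ℝ) - β)) := by
          rw [← ENNReal.ofReal_mul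
            (mul_nonneg (div_nonneg hβ0.le hdβ.le) (Real.rpow_nonneg hR.le _))]
          congr 1
          ring
  refine (add_le_add hB1 hB2).trans (le_of_eq ?_)
  rw [← ENNReal.ofReal_add (mul_nonneg hvbR0 (Real.rpow_nonneg hR.le _))
    (mul_nonneg (mul_nonneg hvbR0 (div_nonneg hβ0.le hdβ.le)) (Real.rpow_nonneg hR.le _))]
  congr 1
  ring

lemma riesz_bound (d : ℕ) {β : ℝ} (hβ0 : 0 < β) (hβd : β < d) :
    ∃ K : ℝ, 0 < K ∧ ∀ {R : ℝ}, 0 < R →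
      ∀ (a : EuclideanSpace ℝ (Fin d)) (m : EuclideanSpace ℝ (Fin d) → ℝ≥0∞),
      (∀ y, m y ≤ 1) → (∫⁻ y, m y) ≤ ENNReal.ofReal ((2 * R) ^ d) →
      (∫⁻ y, Gk d β a y * m y) ≤ ENNReal.ofReal (K * R ^ ((d : ℝ) - β)) := by
  set vbR := (volume (ball (0 : EuclideanSpace ℝ (Fin d)) 1)).toReal with hvbR_def
  have hvbR0 : 0 ≤ vbR := ENNReal.toReal_nonneg
  have hdβ : 0 < (d : ℝ) - β := sub_pos.2 hβd
  have hone : 0 < 1 + β / ((d : ℝ) - β) := by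
    have := div_nonneg hβ0.le hdβ.le
    linarith
  have h2d : (0 : ℝ) < 2 ^ d := by positivity
  refine ⟨vbR * (1 + β / ((d : ℝ) - β)) + 2 ^ d, by nlinarith, ?_⟩
  intro R hR a m hm1 hmtot
  rw [← lintegral_add_compl (fun y => Gk d β a y * m y)
    (measurableSet_ball : MeasurableSet (ball a R))]
  have hnear : (∫⁻ y in ball a R, Gk d β a y * m y)
      ≤ ENNReal.ofReal (vbR * (1 + β / ((d : ℝ) - β)) * R ^ ((d : ℝ) - β)) := by
    refine (lintegral_mono fun y => ?_).trans (near_bound d hβ0 hβd a hR)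
    calc Gk d β a y * m y ≤ Gk d β a y * 1 := mul_le_mul_right (hm1 y) _
      _ = Gk d β a y := mul_one _
  have hfar : (∫⁻ y in (ball a R)ᶜ, Gk d β a y * m y)
      ≤ ENNReal.ofReal (2 ^ d * R ^ ((d : ℝ) - β)) := by
    calc (∫⁻ y in (ball a R)ᶜ, Gk d β a y * m y)
        ≤ ∫⁻ y in (ball a R)ᶜ, ENNReal.ofReal (R ^ (-β)) * m y := by
          refine setLIntegral_mono' measurableSet_ball.compl fun y hy => ?_
          refine mul_le_mul_left (ENNReal.ofReal_le_ofReal ?_) _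
          have hyR : R ≤ ‖a - y‖ := by
            have := (not_lt.1 (fun h => hy (mem_ball.2 h) : ¬ dist y a < R))
            rwa [dist_eq_norm, norm_sub_rev] at this
          exact Real.rpow_le_rpow_of_nonpos hR hyR (neg_nonpos.2 hβ0.le)
      _ = ENNReal.ofReal (R ^ (-β)) * ∫⁻ y in (ball a R)ᶜ, m y :=
          lintegral_const_mul' _ _ ENNReal.ofReal_ne_top
      _ ≤ ENNReal.ofReal (R ^ (-β)) * ENNReal.ofReal ((2 * R) ^ d) :=
          mul_le_mul_right ((setLIntegral_le_lintegral _ _).trans hmtot) _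
      _ = ENNReal.ofReal (R ^ (-β) * (2 * R) ^ d) :=
          (ENNReal.ofReal_mul (Real.rpow_nonneg hR.le _)).symm
      _ = ENNReal.ofReal (2 ^ d * R ^ ((d : ℝ) - β)) := by
          congr 1
          rw [mul_pow, ← Real.rpow_natCast R d,
            show R ^ (-β) * ((2 : ℝ) ^ d * R ^ ((d : ℝ))) =
              2 ^ d * (R ^ ((d : ℝ)) * R ^ (-β)) from by ring,
            ← Real.rpow_add hR, show (d : ℝ) + -β = (d : ℝ) - β from by ring]
  refine (add_le_add hnear hfar).trans (le_of_eq ?_)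
  rw [← ENNReal.ofReal_add
    (mul_nonneg (mul_nonneg hvbR0 hone.le) (Real.rpow_nonneg hR.le _))
    (mul_nonneg h2d.le (Real.rpow_nonneg hR.le _))]
  congr 1
  ring


end Stmt12

open Stmt12 ENNReal in
theorem stmt_12 (d : ℕ) (hd : 1 ≤ d) (β : ℝ) (hβ0 : 0 < β) (hβd : β < d) :
    ∃ C : ℝ, 0 < C ∧ ∀ t₁ t₂ : ℝ, 0 < t₁ → 0 < t₂ → ∀ R : ℝ, 0 < R →
      ∀ ξ : EuclideanSpace ℝ (Fin d),
      (∫ x₁ in box d R, ∫ x₂ in box d R,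
          ∫ ytil : EuclideanSpace ℝ (Fin d),
            heatKernel d t₁ (x₁ - ytil) * ‖ξ - ytil‖ ^ (-β) * ‖x₂ - ytil‖ ^ (-β)) ≤
        C * R ^ (2 * (d : ℝ) - 2 * β) := by
  obtain ⟨K, hK0, hKb⟩ := Stmt12.riesz_bound d hβ0 hβd
  refine ⟨K * K, mul_pos hK0 hK0, ?_⟩
  intro t₁ t₂ ht₁ ht₂ R hR ξ
  have hQm := Stmt12.measurableSet_box d R
  have hQvol : volume (box d R) = ENNReal.ofReal ((2 * R) ^ d) := Stmt12.volume_box d hR.le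
  have hhk : Measurable (heatKernel d t₁) := (Stmt12.continuous_heatKernel d t₁).measurable
  have hnn : ∀ x₁ x₂ y : EuclideanSpace ℝ (Fin d),
      0 ≤ heatKernel d t₁ (x₁ - y) * ‖ξ - y‖ ^ (-β) * ‖x₂ - y‖ ^ (-β) := fun x₁ x₂ y =>
    mul_nonneg (mul_nonneg (Stmt12.heatKernel_nonneg d ht₁.le _) (Real.rpow_nonneg (norm_nonneg _) _))
      (Real.rpow_nonneg (norm_nonneg _) _)
  have hGne : ∀ a y : EuclideanSpace ℝ (Fin d), Stmt12.Gk d β a y ≠ ⊤ := fun a y => by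
    simp [Stmt12.Gk]
  -- pointwise comparison of inner Bochner integral with lintegral
  have h1 : ∀ x₁ x₂ : EuclideanSpace ℝ (Fin d),
      ENNReal.ofReal (∫ y : EuclideanSpace ℝ (Fin d),
        heatKernel d t₁ (x₁ - y) * ‖ξ - y‖ ^ (-β) * ‖x₂ - y‖ ^ (-β))
      ≤ ∫⁻ y, ENNReal.ofReal (heatKernel d t₁ (x₁ - y)) * Stmt12.Gk d β ξ y * Stmt12.Gk d β x₂ y := by
    intro x₁ x₂
    refine (Stmt12.ofReal_integral_le _ _ (hnn x₁ x₂)).trans (le_of_eq (lintegral_congr fun y => ?_))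
    rw [ENNReal.ofReal_mul (mul_nonneg (Stmt12.heatKernel_nonneg d ht₁.le _)
        (Real.rpow_nonneg (norm_nonneg _) _)),
      ENNReal.ofReal_mul (Stmt12.heatKernel_nonneg d ht₁.le _)]
    rfl
  have h2 : ∀ x₁ : EuclideanSpace ℝ (Fin d),
      ENNReal.ofReal (∫ x₂ in box d R, ∫ y : EuclideanSpace ℝ (Fin d),
        heatKernel d t₁ (x₁ - y) * ‖ξ - y‖ ^ (-β) * ‖x₂ - y‖ ^ (-β))
      ≤ ∫⁻ x₂ in box d R, ∫⁻ y,
          ENNReal.ofReal (heatKernel d t₁ (x₁ - y)) * Stmt12.Gk d β ξ y * Stmt12.Gk d β x₂ y := fun x₁ =>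
    (Stmt12.ofReal_integral_le _ _ (fun x₂ => integral_nonneg (hnn x₁ x₂))).trans
      (lintegral_mono (h1 x₁))
  -- bound on the box integral of the Riesz kernel
  have hQint : ∀ y : EuclideanSpace ℝ (Fin d),
      (∫⁻ x₂ in box d R, Stmt12.Gk d β x₂ y) ≤ ENNReal.ofReal (K * R ^ ((d : ℝ) - β)) := by
    intro y
    calc (∫⁻ x₂ in box d R, Stmt12.Gk d β x₂ y) = ∫⁻ x₂ in box d R, Stmt12.Gk d β y x₂ :=
        lintegral_congr fun x₂ => by simp [Stmt12.Gk, norm_sub_rev]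
      _ = ∫⁻ x₂, Stmt12.Gk d β y x₂ * (box d R).indicator 1 x₂ := by
          rw [← lintegral_indicator hQm]
          refine lintegral_congr fun x₂ => ?_
          by_cases h : x₂ ∈ box d R <;> simp [h]
      _ ≤ ENNReal.ofReal (K * R ^ ((d : ℝ) - β)) :=
          hKb hR y _ (fun z => by by_cases h : z ∈ box d R <;> simp [h])
            (by rw [lintegral_indicator_one hQm, hQvol])
  -- step A : integrate out x₂
  have hA : ∀ x₁ : EuclideanSpace ℝ (Fin d),
      (∫⁻ x₂ in box d R, ∫⁻ y,
        ENNReal.ofReal (heatKernel d t₁ (x₁ - y)) * Stmt12.Gk d β ξ y * Stmt12.Gk d β x₂ y)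
      ≤ ENNReal.ofReal (K * R ^ ((d : ℝ) - β)) *
          ∫⁻ y, ENNReal.ofReal (heatKernel d t₁ (x₁ - y)) * Stmt12.Gk d β ξ y := by
    intro x₁
    have measA : AEMeasurable (Function.uncurry fun x₂ y : EuclideanSpace ℝ (Fin d) =>
        ENNReal.ofReal (heatKernel d t₁ (x₁ - y)) * Stmt12.Gk d β ξ y * Stmt12.Gk d β x₂ y)
        ((volume.restrict (box d R)).prod volume) := by
      apply Measurable.aemeasurable
      simp only [Function.uncurry, Stmt12.Gk]
      exact (((hhk.comp (measurable_const.sub measurable_snd)).ennreal_ofReal.mul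
        ((measurable_const.sub measurable_snd).norm.pow measurable_const).ennreal_ofReal).mul
        ((measurable_fst.sub measurable_snd).norm.pow measurable_const).ennreal_ofReal)
    rw [lintegral_lintegral_swap measA]
    calc (∫⁻ y, ∫⁻ x₂ in box d R,
          ENNReal.ofReal (heatKernel d t₁ (x₁ - y)) * Stmt12.Gk d β ξ y * Stmt12.Gk d β x₂ y)
        = ∫⁻ y, (ENNReal.ofReal (heatKernel d t₁ (x₁ - y)) * Stmt12.Gk d β ξ y) *
            ∫⁻ x₂ in box d R, Stmt12.Gk d β x₂ y :=
          lintegral_congr fun y => lintegral_const_mul' _ _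
            (ENNReal.mul_ne_top ENNReal.ofReal_ne_top (hGne ξ y))
      _ ≤ ∫⁻ y, (ENNReal.ofReal (heatKernel d t₁ (x₁ - y)) * Stmt12.Gk d β ξ y) *
            ENNReal.ofReal (K * R ^ ((d : ℝ) - β)) :=
          lintegral_mono fun y => mul_le_mul_right (hQint y) _
      _ = ENNReal.ofReal (K * R ^ ((d : ℝ) - β)) *
            ∫⁻ y, ENNReal.ofReal (heatKernel d t₁ (x₁ - y)) * Stmt12.Gk d β ξ y := by
          rw [lintegral_mul_const' _ _ ENNReal.ofReal_ne_top, mul_comm]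
  -- heat kernel mass bounds
  have hm1 : ∀ y : EuclideanSpace ℝ (Fin d),
      (∫⁻ x₁ in box d R, ENNReal.ofReal (heatKernel d t₁ (x₁ - y))) ≤ 1 := by
    intro y
    calc (∫⁻ x₁ in box d R, ENNReal.ofReal (heatKernel d t₁ (x₁ - y)))
        ≤ ∫⁻ x₁, ENNReal.ofReal (heatKernel d t₁ (x₁ - y)) := setLIntegral_le_lintegral _ _
      _ = 1 := ((measurePreserving_sub_right volume y).lintegral_comp
          hhk.ennreal_ofReal).trans (Stmt12.lintegral_heatKernel d ht₁)
  have measB : AEMeasurable (Function.uncurry fun x₁ y : EuclideanSpace ℝ (Fin d) =>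
      ENNReal.ofReal (heatKernel d t₁ (x₁ - y)))
      ((volume.restrict (box d R)).prod volume) := by
    exact ((hhk.comp (measurable_fst.sub measurable_snd)).ennreal_ofReal).aemeasurable
  have hmtot : (∫⁻ y, ∫⁻ x₁ in box d R, ENNReal.ofReal (heatKernel d t₁ (x₁ - y)))
      ≤ ENNReal.ofReal ((2 * R) ^ d) := by
    rw [← lintegral_lintegral_swap measB]
    calc (∫⁻ x₁ in box d R, ∫⁻ y, ENNReal.ofReal (heatKernel d t₁ (x₁ - y)))
        = ∫⁻ _ in box d R, (1 : ℝ≥0∞) :=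
          lintegral_congr fun x₁ =>
            ((Measure.measurePreserving_sub_left volume x₁).lintegral_comp
              hhk.ennreal_ofReal).trans (Stmt12.lintegral_heatKernel d ht₁)
      _ = volume (box d R) := setLIntegral_one _
      _ ≤ ENNReal.ofReal ((2 * R) ^ d) := le_of_eq hQvol
  -- step B : integrate out x₁ and y
  have hB : (∫⁻ x₁ in box d R, ∫⁻ y,
      ENNReal.ofReal (heatKernel d t₁ (x₁ - y)) * Stmt12.Gk d β ξ y)
      ≤ ENNReal.ofReal (K * R ^ ((d : ℝ) - β)) := by
    have measC : AEMeasurable (Function.uncurry fun x₁ y : EuclideanSpace ℝ (Fin d) =>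
        ENNReal.ofReal (heatKernel d t₁ (x₁ - y)) * Stmt12.Gk d β ξ y)
        ((volume.restrict (box d R)).prod volume) := by
      apply Measurable.aemeasurable
      simp only [Function.uncurry, Stmt12.Gk]
      exact ((hhk.comp (measurable_fst.sub measurable_snd)).ennreal_ofReal.mul
        ((measurable_const.sub measurable_snd).norm.pow measurable_const).ennreal_ofReal)
    rw [lintegral_lintegral_swap measC]
    calc (∫⁻ y, ∫⁻ x₁ in box d R, ENNReal.ofReal (heatKernel d t₁ (x₁ - y)) * Stmt12.Gk d β ξ y)
        = ∫⁻ y, Stmt12.Gk d β ξ y * ∫⁻ x₁ in box d R, ENNReal.ofReal (heatKernel d t₁ (x₁ - y)) := by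
          refine lintegral_congr fun y => ?_
          calc (∫⁻ x₁ in box d R, ENNReal.ofReal (heatKernel d t₁ (x₁ - y)) * Stmt12.Gk d β ξ y)
              = ∫⁻ x₁ in box d R, Stmt12.Gk d β ξ y * ENNReal.ofReal (heatKernel d t₁ (x₁ - y)) :=
                lintegral_congr fun x₁ => mul_comm _ _
            _ = Stmt12.Gk d β ξ y * ∫⁻ x₁ in box d R, ENNReal.ofReal (heatKernel d t₁ (x₁ - y)) :=
                lintegral_const_mul' _ _ (hGne ξ y)
      _ ≤ ENNReal.ofReal (K * R ^ ((d : ℝ) - β)) := hKb hR ξ _ hm1 hmtot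
  -- final assembly
  calc (∫ x₁ in box d R, ∫ x₂ in box d R, ∫ y : EuclideanSpace ℝ (Fin d),
        heatKernel d t₁ (x₁ - y) * ‖ξ - y‖ ^ (-β) * ‖x₂ - y‖ ^ (-β))
      ≤ (∫⁻ x₁ in box d R, ENNReal.ofReal (∫ x₂ in box d R, ∫ y : EuclideanSpace ℝ (Fin d),
          heatKernel d t₁ (x₁ - y) * ‖ξ - y‖ ^ (-β) * ‖x₂ - y‖ ^ (-β))).toReal :=
        Stmt12.integral_le_toReal_lintegral _ _
          (fun x₁ => integral_nonneg fun x₂ => integral_nonneg fun y => hnn x₁ x₂ y)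
    _ ≤ (ENNReal.ofReal ((K * K) * R ^ (2 * (d : ℝ) - 2 * β))).toReal := by
        refine ENNReal.toReal_mono ENNReal.ofReal_ne_top ?_
        calc (∫⁻ x₁ in box d R, ENNReal.ofReal (∫ x₂ in box d R,
              ∫ y : EuclideanSpace ℝ (Fin d),
              heatKernel d t₁ (x₁ - y) * ‖ξ - y‖ ^ (-β) * ‖x₂ - y‖ ^ (-β)))
            ≤ ∫⁻ x₁ in box d R, ∫⁻ x₂ in box d R, ∫⁻ y,
                ENNReal.ofReal (heatKernel d t₁ (x₁ - y)) * Stmt12.Gk d β ξ y * Stmt12.Gk d β x₂ y :=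
              lintegral_mono fun x₁ => h2 x₁
          _ ≤ ∫⁻ x₁ in box d R, ENNReal.ofReal (K * R ^ ((d : ℝ) - β)) *
                ∫⁻ y, ENNReal.ofReal (heatKernel d t₁ (x₁ - y)) * Stmt12.Gk d β ξ y :=
              lintegral_mono fun x₁ => hA x₁
          _ = ENNReal.ofReal (K * R ^ ((d : ℝ) - β)) * ∫⁻ x₁ in box d R,
                ∫⁻ y, ENNReal.ofReal (heatKernel d t₁ (x₁ - y)) * Stmt12.Gk d β ξ y :=
              lintegral_const_mul' _ _ ENNReal.ofReal_ne_top
          _ ≤ ENNReal.ofReal (K * R ^ ((d : ℝ) - β)) * ENNReal.ofReal (K * R ^ ((d : ℝ) - β)) :=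
              mul_le_mul_right hB _
          _ = ENNReal.ofReal ((K * K) * R ^ (2 * (d : ℝ) - 2 * β)) := by
              rw [← ENNReal.ofReal_mul (mul_nonneg hK0.le (Real.rpow_nonneg hR.le _))]
              congr 1
              rw [show 2 * (d : ℝ) - 2 * β = ((d : ℝ) - β) + ((d : ℝ) - β) from by ring,
                Real.rpow_add hR]
              ring
    _ = (K * K) * R ^ (2 * (d : ℝ) - 2 * β) :=
        ENNReal.toReal_ofReal
          (mul_nonneg (mul_pos hK0 hK0).le (Real.rpow_nonneg hR.le _))
end
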